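/- arXiv:1904.05030 — 2 statements merged into one kernel-verified Lean document; each statement's English description precedes it below -/
import Mathlib

section
/- For i.i.d. random matrices A_k and the recursion x_{k+1} = A_k x_k with deterministic x_0, exponential second-moment stability holds if and only if there exist a symmetric positive definite P and λ ∈ (0,1) such that λ² P − E[A_0^T P A_0] ≥ 0 in the positive semidefinite order. -/
open MeasureTheory ProbabilityTheory Matrix

/-- Matrices carry the product measurable structure (entrywise). -/
instance matrixMeasurableSpace {m n α : Type*} [MeasurableSpace α] :
    MeasurableSpace (Matrix m n α) :=
  inferInstanceAs (MeasurableSpace (m → n → α))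

set_option linter.unusedSectionVars false
set_option linter.unnecessarySimpa false
set_option linter.unusedTactic false
set_option linter.unusedVariables false
section Aux


variable {Ω : Type*} [MeasurableSpace Ω] {μ : Measure Ω} {n : ℕ}
variable [IsProbabilityMeasure μ] {A : ℕ → Ω → Matrix (Fin n) (Fin n) ℝ}

lemma measurable_entry (i j : Fin n) : Measurable (fun M : Matrix (Fin n) (Fin n) ℝ => M i j) :=
  (measurable_pi_apply j).comp (measurable_pi_apply i)

lemma L2_mul_integrable {f g : Ω → ℝ} (hf : MemLp f 2 μ) (hg : MemLp g 2 μ) :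
    Integrable (fun ω => f ω * g ω) μ := by
  refine Integrable.mono' (((hf.integrable_sq.add hg.integrable_sq)).div_const 2)
    (hf.aestronglyMeasurable.mul hg.aestronglyMeasurable) (ae_of_all _ fun ω => ?_)
  have := sq_nonneg (f ω - g ω)
  have := sq_nonneg (f ω + g ω)
  rw [Real.norm_eq_abs, abs_le]
  simp only [Pi.add_apply]
  constructor <;> nlinarith

lemma indep_mul_memL2 {f g : Ω → ℝ} (h : IndepFun f g μ) (hf : MemLp f 2 μ) (hg : MemLp g 2 μ) :
    MemLp (fun ω => f ω * g ω) 2 μ := by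
  have key : MemLp (f * g) 2 μ := by
    rw [memLp_two_iff_integrable_sq (hf.aestronglyMeasurable.mul hg.aestronglyMeasurable)]
    have h2 : IndepFun (fun ω => f ω ^ 2) (fun ω => g ω ^ 2) μ :=
      h.comp (measurable_id.pow_const 2) (measurable_id.pow_const 2)
    have := h2.integrable_mul hf.integrable_sq hg.integrable_sq
    simp only [Pi.mul_apply]
    have heq : (fun x => (f x * g x) ^ 2) = fun ω => f ω ^ 2 * g ω ^ 2 := by
      funext ω; ring
    rw [heq]
    exact this
  exact key

lemma map_integral_eq (hmeas : ∀ k, Measurable (A k)) (hident : ∀ k, μ.map (A k) = μ.map (A 0))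
    {f : Matrix (Fin n) (Fin n) ℝ → ℝ} (hf : Measurable f) (k : ℕ) :
    ∫ ω, f (A k ω) ∂μ = ∫ ω, f (A 0 ω) ∂μ := by
  rw [← integral_map (hmeas k).aemeasurable hf.aestronglyMeasurable, hident k,
    integral_map (hmeas 0).aemeasurable hf.aestronglyMeasurable]

lemma entry_L2 (hmeas : ∀ k, Measurable (A k)) (hident : ∀ k, μ.map (A k) = μ.map (A 0))
    (hL2 : ∀ i j, MemLp (fun ω => A 0 ω i j) 2 μ) (k : ℕ) (i j : Fin n) :
    MemLp (fun ω => A k ω i j) 2 μ := by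
  have hg := (measurable_entry (n := n) i j)
  have h0 : MemLp (fun M : Matrix (Fin n) (Fin n) ℝ => M i j) 2 (μ.map (A 0)) :=
    (memLp_map_measure_iff hg.aestronglyMeasurable (hmeas 0).aemeasurable).mpr (hL2 i j)
  have hk : MemLp (fun M : Matrix (Fin n) (Fin n) ℝ => M i j) 2 (μ.map (A k)) := by
    rw [hident k]; exact h0
  exact (memLp_map_measure_iff hg.aestronglyMeasurable (hmeas k).aemeasurable).mp hk

/-- product of matrices `v (k-1) * ⋯ * v 0`. -/
def revProd (k : ℕ) (v : ℕ → Matrix (Fin n) (Fin n) ℝ) : Matrix (Fin n) (Fin n) ℝ :=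
  ((List.range k).reverse.map v).prod

lemma revProd_zero (v : ℕ → Matrix (Fin n) (Fin n) ℝ) : revProd 0 v = 1 := rfl

lemma revProd_succ (k : ℕ) (v : ℕ → Matrix (Fin n) (Fin n) ℝ) :
    revProd (k + 1) v = v k * revProd k v := by
  simp [revProd, List.range_succ]

lemma measurable_matmul {α : Type*} [MeasurableSpace α] {M N : α → Matrix (Fin n) (Fin n) ℝ}
    (hM : Measurable M) (hN : Measurable N) : Measurable (fun ω => M ω * N ω) := by
  apply measurable_pi_lambda
  intro i
  apply measurable_pi_lambda
  intro j
  simp only [Matrix.mul_apply]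
  exact Finset.measurable_sum _ fun l _ =>
    (((measurable_entry i l).comp hM)).mul ((measurable_entry l j).comp hN)

lemma measurable_revProd (k : ℕ) : Measurable (revProd (n := n) k) := by
  induction k with
  | zero =>
      have : (revProd (n := n) 0) = fun _ => (1 : Matrix (Fin n) (Fin n) ℝ) := rfl
      rw [this]; exact measurable_const
  | succ k ih =>
      have : (revProd (n := n) (k+1)) = fun v => v k * revProd k v := by
        funext v; exact revProd_succ k v
      rw [this]
      exact measurable_matmul (measurable_pi_apply k) ih

lemma revProd_congr (k : ℕ) {v w : ℕ → Matrix (Fin n) (Fin n) ℝ}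
    (h : ∀ i < k, v i = w i) : revProd k v = revProd k w := by
  unfold revProd
  congr 1
  apply List.map_congr_left
  intro i hi
  exact h i (by simpa using (List.mem_reverse.mp hi))

lemma phi_eq_revProd {Φ : ℕ → Ω → Matrix (Fin n) (Fin n) ℝ}
    (hΦ0 : ∀ ω, Φ 0 ω = 1) (hΦS : ∀ k ω, Φ (k + 1) ω = A k ω * Φ k ω) (k : ℕ) (ω : Ω) :
    Φ k ω = revProd k (fun i => A i ω) := by
  induction k with
  | zero => rw [hΦ0, revProd_zero]
  | succ k ih => rw [hΦS, ih, revProd_succ]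

lemma indep_A_phi (hmeas : ∀ k, Measurable (A k))
    (hindep : iIndepFun A μ)
    {Φ : ℕ → Ω → Matrix (Fin n) (Fin n) ℝ}
    (hΦ0 : ∀ ω, Φ 0 ω = 1) (hΦS : ∀ k ω, Φ (k + 1) ω = A k ω * Φ k ω) (k : ℕ) :
    IndepFun (A k) (Φ k) μ := by
  classical
  have hdisj : Disjoint ({k} : Finset ℕ) (Finset.range k) := by
    simp [Finset.disjoint_left]
  have hbase := hindep.indepFun_finset {k} (Finset.range k) hdisj hmeas
  -- compose with measurable maps
  set e : (({k} : Finset ℕ) → Matrix (Fin n) (Fin n) ℝ) → Matrix (Fin n) (Fin n) ℝ :=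
    fun w => w ⟨k, by simp⟩ with he
  set g : ({x : ℕ // x ∈ Finset.range k} → Matrix (Fin n) (Fin n) ℝ) → Matrix (Fin n) (Fin n) ℝ :=
    fun w => revProd k (fun i => if h : i ∈ Finset.range k then w ⟨i, h⟩ else 1) with hg
  have hge : Measurable e := measurable_pi_apply _
  have hgg : Measurable g := by
    apply (measurable_revProd k).comp
    apply measurable_pi_lambda
    intro i
    by_cases h : i ∈ Finset.range k
    · simp only [h, dif_pos]
      exact measurable_pi_apply _
    · simp only [h, dif_neg, not_false_iff]
      exact measurable_const
  have hcomp := hbase.comp hge hgg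
  have h1 : (e ∘ fun ω (i : ({k} : Finset ℕ)) => A i ω) = A k := rfl
  have h2 : (g ∘ fun ω (i : {x : ℕ // x ∈ Finset.range k}) => A i ω) = Φ k := by
    funext ω
    simp only [Function.comp_apply, hg]
    rw [phi_eq_revProd hΦ0 hΦS k ω]
    apply revProd_congr
    intro i hi
    simp [Finset.mem_range.mpr hi]
  rwa [h1, h2] at hcomp

lemma phi_measurable (hmeas : ∀ k, Measurable (A k))
    {Φ : ℕ → Ω → Matrix (Fin n) (Fin n) ℝ}
    (hΦ0 : ∀ ω, Φ 0 ω = 1) (hΦS : ∀ k ω, Φ (k + 1) ω = A k ω * Φ k ω) (k : ℕ) :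
    Measurable (Φ k) := by
  have : Φ k = fun ω => revProd k (fun i => A i ω) := funext (phi_eq_revProd hΦ0 hΦS k)
  rw [this]
  exact (measurable_revProd k).comp (measurable_pi_lambda _ fun i => hmeas i)

lemma phi_entry_L2 (hmeas : ∀ k, Measurable (A k))
    (hindep : iIndepFun A μ)
    (hident : ∀ k, μ.map (A k) = μ.map (A 0))
    (hL2 : ∀ i j, MemLp (fun ω => A 0 ω i j) 2 μ)
    {Φ : ℕ → Ω → Matrix (Fin n) (Fin n) ℝ}
    (hΦ0 : ∀ ω, Φ 0 ω = 1) (hΦS : ∀ k ω, Φ (k + 1) ω = A k ω * Φ k ω) (k : ℕ) (i j : Fin n) :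
    MemLp (fun ω => Φ k ω i j) 2 μ := by
  induction k generalizing i j with
  | zero =>
      have : (fun ω => Φ 0 ω i j) = fun _ => (1 : Matrix (Fin n) (Fin n) ℝ) i j := by
        funext ω; rw [hΦ0]
      rw [this]; exact memLp_const _
  | succ k ih =>
      have hind := indep_A_phi hmeas hindep hΦ0 hΦS k
      have : (fun ω => Φ (k+1) ω i j) = fun ω => ∑ l, A k ω i l * Φ k ω l j := by
        funext ω; rw [hΦS]; simp [Matrix.mul_apply]
      rw [this]
      apply memLp_finset_sum
      intro l _
      exact indep_mul_memL2 (hind.comp (measurable_entry i l) (measurable_entry l j))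
        (entry_L2 hmeas hident hL2 k i l) (ih l j)

lemma quad_entry (Y C : Matrix (Fin n) (Fin n) ℝ) (i j : Fin n) :
    (Yᵀ * C * Y) i j = ∑ p, ∑ q, C p q * (Y p i * Y q j) := by
  simp only [Matrix.mul_apply, Matrix.transpose_apply, Finset.sum_mul, Finset.mul_sum]
  rw [Finset.sum_comm]
  apply Finset.sum_congr rfl; intro p _
  apply Finset.sum_congr rfl; intro q _
  ring

lemma quad_integrable {Y : Ω → Matrix (Fin n) (Fin n) ℝ}
    (hY : ∀ i j, MemLp (fun ω => Y ω i j) 2 μ) (W : Matrix (Fin n) (Fin n) ℝ) (i j : Fin n) :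
    Integrable (fun ω => ((Y ω)ᵀ * W * Y ω) i j) μ := by
  have : (fun ω => ((Y ω)ᵀ * W * Y ω) i j)
      = fun ω => ∑ p, ∑ q, W p q * (Y ω p i * Y ω q j) := by
    funext ω; exact quad_entry (Y ω) W i j
  rw [this]
  apply integrable_finset_sum; intro p _
  apply integrable_finset_sum; intro q _
  exact (L2_mul_integrable (hY p i) (hY q j)).const_mul _

/-- The one-step expectation operator. -/
noncomputable def Texp {Ω' : Type*} [MeasurableSpace Ω'] (ν : Measure Ω')
    (A0 : Ω' → Matrix (Fin n) (Fin n) ℝ) (W : Matrix (Fin n) (Fin n) ℝ) :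
    Matrix (Fin n) (Fin n) ℝ :=
  Matrix.of fun p q => ∫ ω, ((A0 ω)ᵀ * W * A0 ω) p q ∂ν

lemma key_step (hmeas : ∀ k, Measurable (A k))
    (hindep : iIndepFun A μ)
    (hident : ∀ k, μ.map (A k) = μ.map (A 0))
    (hL2 : ∀ i j, MemLp (fun ω => A 0 ω i j) 2 μ)
    {Φ : ℕ → Ω → Matrix (Fin n) (Fin n) ℝ}
    (hΦ0 : ∀ ω, Φ 0 ω = 1) (hΦS : ∀ k ω, Φ (k + 1) ω = A k ω * Φ k ω)
    (W : Matrix (Fin n) (Fin n) ℝ) (k : ℕ) (i j : Fin n) :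
    ∫ ω, ((Φ (k+1) ω)ᵀ * W * Φ (k+1) ω) i j ∂μ
      = ∫ ω, ((Φ k ω)ᵀ * (Texp μ (A 0) W) * Φ k ω) i j ∂μ := by
  have hind := indep_A_phi hmeas hindep hΦ0 hΦS k
  have hAL2 := fun i j => entry_L2 hmeas hident hL2 k i j
  have hΦL2 := fun i j => phi_entry_L2 hmeas hindep hident hL2 hΦ0 hΦS k i j
  -- rewrite LHS
  have h1 : ∀ ω, ((Φ (k+1) ω)ᵀ * W * Φ (k+1) ω) i j
      = ∑ p, ∑ q, ((A k ω)ᵀ * W * A k ω) p q * (Φ k ω p i * Φ k ω q j) := by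
    intro ω
    have : Φ (k+1) ω = A k ω * Φ k ω := hΦS k ω
    rw [this]
    have : (A k ω * Φ k ω)ᵀ * W * (A k ω * Φ k ω)
        = (Φ k ω)ᵀ * ((A k ω)ᵀ * W * A k ω) * Φ k ω := by
      rw [Matrix.transpose_mul]; noncomm_ring
    rw [this, quad_entry]
  have h2 : ∀ ω, ((Φ k ω)ᵀ * (Texp μ (A 0) W) * Φ k ω) i j
      = ∑ p, ∑ q, (Texp μ (A 0) W) p q * (Φ k ω p i * Φ k ω q j) := fun ω =>
    quad_entry _ _ i j
  simp only [h1, h2]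
  -- integrability of pieces
  have hXint : ∀ p q, Integrable (fun ω => ((A k ω)ᵀ * W * A k ω) p q) μ :=
    fun p q => quad_integrable hAL2 W p q
  have hYint : ∀ p q, Integrable (fun ω => Φ k ω p i * Φ k ω q j) μ :=
    fun p q => L2_mul_integrable (hΦL2 p i) (hΦL2 q j)
  have hindpq : ∀ p q, IndepFun (fun ω => ((A k ω)ᵀ * W * A k ω) p q)
      (fun ω => Φ k ω p i * Φ k ω q j) μ := by
    intro p q
    have hm1 : Measurable (fun M : Matrix (Fin n) (Fin n) ℝ => (Mᵀ * W * M) p q) := by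
      have : (fun M : Matrix (Fin n) (Fin n) ℝ => (Mᵀ * W * M) p q)
          = fun M => ∑ u, ∑ v, W u v * (M u p * M v q) := by
        funext M; exact quad_entry M W p q
      rw [this]
      exact Finset.measurable_sum _ fun u _ => Finset.measurable_sum _ fun v _ =>
        (((measurable_entry u p).mul (measurable_entry v q)).const_mul _)
    have hm2 : Measurable (fun M : Matrix (Fin n) (Fin n) ℝ => M p i * M q j) :=
      (measurable_entry p i).mul (measurable_entry q j)
    exact hind.comp hm1 hm2
  have hprod : ∀ p q : Fin n, Integrable
      (fun ω => ((A k ω)ᵀ * W * A k ω) p q * (Φ k ω p i * Φ k ω q j)) μ :=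
    fun p q => (hindpq p q).integrable_mul (hXint p q) (hYint p q)
  have hconst : ∀ p q : Fin n, Integrable
      (fun ω => (Texp μ (A 0) W) p q * (Φ k ω p i * Φ k ω q j)) μ :=
    fun p q => (hYint p q).const_mul _
  rw [integral_finset_sum _ (fun p _ => integrable_finset_sum _ (fun q _ => hprod p q))]
  rw [integral_finset_sum _ (fun p _ => integrable_finset_sum _ (fun q _ => hconst p q))]
  apply Finset.sum_congr rfl; intro p _
  rw [integral_finset_sum _ (fun q _ => hprod p q)]
  rw [integral_finset_sum _ (fun q _ => hconst p q)]
  apply Finset.sum_congr rfl; intro q _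
  have hmul : ∫ ω, ((A k ω)ᵀ * W * A k ω) p q * (Φ k ω p i * Φ k ω q j) ∂μ
      = (∫ ω, ((A k ω)ᵀ * W * A k ω) p q ∂μ) * ∫ ω, Φ k ω p i * Φ k ω q j ∂μ :=
    (hindpq p q).integral_fun_mul_eq_mul_integral (hXint p q).1 (hYint p q).1
  rw [hmul, integral_const_mul]
  congr 1
  -- expectation of A k entry equals Texp entry
  have hm1 : Measurable (fun M : Matrix (Fin n) (Fin n) ℝ => (Mᵀ * W * M) p q) := by
    have : (fun M : Matrix (Fin n) (Fin n) ℝ => (Mᵀ * W * M) p q)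
        = fun M => ∑ u, ∑ v, W u v * (M u p * M v q) := by
      funext M; exact quad_entry M W p q
    rw [this]
    exact Finset.measurable_sum _ fun u _ => Finset.measurable_sum _ fun v _ =>
      (((measurable_entry u p).mul (measurable_entry v q)).const_mul _)
  exact map_integral_eq hmeas hident hm1 k

lemma phi_expectation (hmeas : ∀ k, Measurable (A k))
    (hindep : iIndepFun A μ)
    (hident : ∀ k, μ.map (A k) = μ.map (A 0))
    (hL2 : ∀ i j, MemLp (fun ω => A 0 ω i j) 2 μ)
    {Φ : ℕ → Ω → Matrix (Fin n) (Fin n) ℝ}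
    (hΦ0 : ∀ ω, Φ 0 ω = 1) (hΦS : ∀ k ω, Φ (k + 1) ω = A k ω * Φ k ω)
    (W : Matrix (Fin n) (Fin n) ℝ) (k : ℕ) :
    (Matrix.of fun i j => ∫ ω, ((Φ k ω)ᵀ * W * Φ k ω) i j ∂μ) = (Texp μ (A 0))^[k] W := by
  induction k generalizing W with
  | zero =>
      ext i j
      simp only [Function.iterate_zero, id_eq, Matrix.of_apply]
      have : ∀ ω, ((Φ 0 ω)ᵀ * W * Φ 0 ω) i j = W i j := by
        intro ω; rw [hΦ0]; simp
      simp only [this]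
      simp [integral_const]
  | succ k ih =>
      ext i j
      simp only [Matrix.of_apply]
      rw [show ∫ ω, ((Φ (k+1) ω)ᵀ * W * Φ (k+1) ω) i j ∂μ
            = ∫ ω, ((Φ k ω)ᵀ * (Texp μ (A 0) W) * Φ k ω) i j ∂μ
          from key_step hmeas hindep hident hL2 hΦ0 hΦS W k i j]
      have h2 : (∫ ω, ((Φ k ω)ᵀ * (Texp μ (A 0) W) * Φ k ω) i j ∂μ)
          = ((Texp μ (A 0))^[k] (Texp μ (A 0) W)) i j := by
        have h3 := ih (Texp μ (A 0) W)
        calc (∫ ω, ((Φ k ω)ᵀ * (Texp μ (A 0) W) * Φ k ω) i j ∂μ)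
            = (Matrix.of fun i j => ∫ ω, ((Φ k ω)ᵀ * (Texp μ (A 0) W) * Φ k ω) i j ∂μ) i j := rfl
          _ = ((Texp μ (A 0))^[k] (Texp μ (A 0) W)) i j := by rw [h3]
      rw [h2, ← Function.iterate_succ_apply]

lemma quad_integral {F : Ω → Matrix (Fin n) (Fin n) ℝ}
    (hF : ∀ i j, Integrable (fun ω => F ω i j) μ) (x : Fin n → ℝ) :
    x ⬝ᵥ (Matrix.of fun i j => ∫ ω, F ω i j ∂μ) *ᵥ x = ∫ ω, x ⬝ᵥ (F ω) *ᵥ x ∂μ := by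
  have hexp : ∀ (M : Matrix (Fin n) (Fin n) ℝ), x ⬝ᵥ M *ᵥ x = ∑ i, ∑ j, x i * (M i j * x j) := by
    intro M
    simp [dotProduct, Matrix.mulVec, Finset.mul_sum]
  simp only [hexp, Matrix.of_apply]
  rw [integral_finset_sum _ (fun i _ => integrable_finset_sum _ (fun j _ =>
    ((hF i j).mul_const _).const_mul _))]
  apply Finset.sum_congr rfl; intro i _
  rw [integral_finset_sum _ (fun j _ => ((hF i j).mul_const _).const_mul _)]
  apply Finset.sum_congr rfl; intro j _
  rw [integral_const_mul, integral_mul_const]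

lemma quad_as_vec (Y P : Matrix (Fin n) (Fin n) ℝ) (x : Fin n → ℝ) :
    x ⬝ᵥ (Yᵀ * P * Y) *ᵥ x = (Y *ᵥ x) ⬝ᵥ P *ᵥ (Y *ᵥ x) := by
  rw [← Matrix.mulVec_mulVec, ← Matrix.mulVec_mulVec, Matrix.dotProduct_mulVec,
    Matrix.vecMul_transpose]

lemma quad_one (Y : Matrix (Fin n) (Fin n) ℝ) (x : Fin n → ℝ) :
    x ⬝ᵥ (Yᵀ * 1 * Y) *ᵥ x = ∑ i, (Y *ᵥ x) i ^ 2 := by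
  rw [quad_as_vec]
  simp [dotProduct, sq]

lemma quad_smul (M : Matrix (Fin n) (Fin n) ℝ) (c : ℝ) (x : Fin n → ℝ) :
    (c • x) ⬝ᵥ M *ᵥ (c • x) = c ^ 2 * (x ⬝ᵥ M *ᵥ x) := by
  rw [Matrix.mulVec_smul, smul_dotProduct, dotProduct_smul]
  simp [smul_eq_mul]; ring

lemma sum_sq_pos_of_ne_zero {x : Fin n → ℝ} (hx : x ≠ 0) : 0 < ∑ i, x i ^ 2 := by
  rcases Function.ne_iff.mp hx with ⟨i, hi⟩
  have hi' : x i ≠ 0 := by simpa using hi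
  have : (0:ℝ) < x i ^ 2 := by positivity
  exact lt_of_lt_of_le this (Finset.single_le_sum (fun j _ => sq_nonneg (x j)) (Finset.mem_univ i))

lemma posdef_upper (P : Matrix (Fin n) (Fin n) ℝ) :
    ∃ c2 > 0, ∀ x : Fin n → ℝ, x ⬝ᵥ P *ᵥ x ≤ c2 * ∑ i, x i ^ 2 := by
  have hpos : (0:ℝ) < (∑ i, ∑ j, |P i j|) + 1 := by
    have : (0:ℝ) ≤ ∑ i, ∑ j, |P i j| :=
      Finset.sum_nonneg fun i _ => Finset.sum_nonneg fun j _ => abs_nonneg _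
    linarith
  refine ⟨(∑ i, ∑ j, |P i j|) + 1, hpos, fun x => ?_⟩
  set S := ∑ i, x i ^ 2 with hS
  have hS0 : 0 ≤ S := Finset.sum_nonneg fun i _ => sq_nonneg _
  have hsq : ∀ i, x i ^ 2 ≤ S := fun i =>
    Finset.single_le_sum (fun j _ => sq_nonneg (x j)) (Finset.mem_univ i)
  have hexp : x ⬝ᵥ P *ᵥ x = ∑ i, ∑ j, x i * (P i j * x j) := by
    simp [dotProduct, Matrix.mulVec, Finset.mul_sum]
  rw [hexp]
  have hbd : ∀ i j : Fin n, x i * (P i j * x j) ≤ |P i j| * S := by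
    intro i j
    have h1 := hsq i
    have h2 := hsq j
    nlinarith [sq_nonneg (x i - x j), sq_nonneg (x i + x j), le_abs_self (P i j),
      neg_abs_le (P i j), abs_nonneg (P i j)]
  calc ∑ i, ∑ j, x i * (P i j * x j) ≤ ∑ i, ∑ j, |P i j| * S :=
        Finset.sum_le_sum fun i _ => Finset.sum_le_sum fun j _ => hbd i j
    _ = (∑ i, ∑ j, |P i j|) * S := by rw [Finset.sum_mul]; simp [Finset.sum_mul]
    _ ≤ ((∑ i, ∑ j, |P i j|) + 1) * S := by
        apply mul_le_mul_of_nonneg_right _ hS0; linarith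

lemma posdef_lower {P : Matrix (Fin n) (Fin n) ℝ} (hP : P.PosDef) :
    ∃ c1 > 0, ∀ x : Fin n → ℝ, c1 * ∑ i, x i ^ 2 ≤ x ⬝ᵥ P *ᵥ x := by
  rcases Nat.eq_zero_or_pos n with hn | hn
  · subst hn
    exact ⟨1, one_pos, fun x => by simp [dotProduct]⟩
  · have i0 : Fin n := ⟨0, hn⟩
    set S : Set (Fin n → ℝ) := {x | ∑ i, x i ^ 2 = 1} with hSdef
    have hq : Continuous fun x : Fin n → ℝ => x ⬝ᵥ P *ᵥ x := by
      have : (fun x : Fin n → ℝ => x ⬝ᵥ P *ᵥ x)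
          = fun x => ∑ i, x i * ∑ j, P i j * x j := by
        funext x; simp [dotProduct, Matrix.mulVec]
      rw [this]
      exact continuous_finset_sum _ fun i _ => (continuous_apply i).mul
        (continuous_finset_sum _ fun j _ => (continuous_const.mul (continuous_apply j)))
    have hsum : Continuous fun x : Fin n → ℝ => ∑ i, x i ^ 2 :=
      continuous_finset_sum _ fun i _ => (continuous_apply i).pow 2
    have hclosed : IsClosed S := isClosed_eq hsum continuous_const
    have hbdd : Bornology.IsBounded S := by
      apply Bornology.IsBounded.subset (Metric.isBounded_closedBall (x := (0 : Fin n → ℝ)) (r := 1))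
      intro x hx
      simp only [Metric.mem_closedBall, dist_zero_right]
      rw [pi_norm_le_iff_of_nonneg zero_le_one]
      intro i
      have hle : x i ^ 2 ≤ 1 := by
        rw [← hx]
        exact Finset.single_le_sum (fun j _ => sq_nonneg (x j)) (Finset.mem_univ i)
      rw [Real.norm_eq_abs, abs_le]
      constructor <;> nlinarith
    have hcomp : IsCompact S := Metric.isCompact_of_isClosed_isBounded hclosed hbdd
    have hne : S.Nonempty := by
      refine ⟨Pi.single i0 1, ?_⟩
      simp only [hSdef, Set.mem_setOf_eq]
      rw [Finset.sum_eq_single i0]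
      · simp
      · intro b _ hb; simp [Pi.single_apply, hb]
      · intro h; exact absurd (Finset.mem_univ i0) h
    obtain ⟨x0, hx0S, hx0min⟩ := hcomp.exists_isMinOn hne hq.continuousOn
    have hx0ne : x0 ≠ 0 := by
      intro h
      rw [hSdef] at hx0S
      simp only [Set.mem_setOf_eq, h] at hx0S
      simp at hx0S
    refine ⟨x0 ⬝ᵥ P *ᵥ x0, ?_, fun x => ?_⟩
    · have := hP.dotProduct_mulVec_pos hx0ne
      simpa using this
    · by_cases hx : x = 0
      · simp [hx, dotProduct]
      · set s := Real.sqrt (∑ i, x i ^ 2) with hs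
        have hsum_pos : 0 < ∑ i, x i ^ 2 := sum_sq_pos_of_ne_zero hx
        have hspos : 0 < s := Real.sqrt_pos.mpr hsum_pos
        have hs2 : s ^ 2 = ∑ i, x i ^ 2 := Real.sq_sqrt hsum_pos.le
        have hmem : (s⁻¹ • x) ∈ S := by
          simp only [hSdef, Set.mem_setOf_eq, Pi.smul_apply, smul_eq_mul]
          have : ∀ i, (s⁻¹ * x i) ^ 2 = s⁻¹ ^ 2 * x i ^ 2 := fun i => by ring
          simp only [this]
          rw [← Finset.mul_sum, ← hs2]
          field_simp
        have hmin := hx0min hmem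
        have hval : (s⁻¹ • x) ⬝ᵥ P *ᵥ (s⁻¹ • x) = s⁻¹ ^ 2 * (x ⬝ᵥ P *ᵥ x) := quad_smul P s⁻¹ x
        have : x0 ⬝ᵥ P *ᵥ x0 ≤ s⁻¹ ^ 2 * (x ⬝ᵥ P *ᵥ x) := by
          simpa [hval] using hmin
        have h2 : (x0 ⬝ᵥ P *ᵥ x0) * s ^ 2 ≤ x ⬝ᵥ P *ᵥ x := by
          rw [← hs2] at *
          have hs2pos : 0 < s ^ 2 := by positivity
          calc (x0 ⬝ᵥ P *ᵥ x0) * s ^ 2 ≤ (s⁻¹ ^ 2 * (x ⬝ᵥ P *ᵥ x)) * s ^ 2 :=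
                mul_le_mul_of_nonneg_right this hs2pos.le
            _ = x ⬝ᵥ P *ᵥ x := by field_simp
        rw [← hs2]; linarith

lemma quad_integrable_vec {F : Ω → Matrix (Fin n) (Fin n) ℝ}
    (hF : ∀ i j, Integrable (fun ω => F ω i j) μ) (x : Fin n → ℝ) :
    Integrable (fun ω => x ⬝ᵥ (F ω) *ᵥ x) μ := by
  have hexp : ∀ (M : Matrix (Fin n) (Fin n) ℝ), x ⬝ᵥ M *ᵥ x = ∑ i, ∑ j, x i * (M i j * x j) := by
    intro M
    simp [dotProduct, Matrix.mulVec, Finset.mul_sum]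
  simp only [hexp]
  exact integrable_finset_sum _ fun i _ => integrable_finset_sum _ fun j _ =>
    ((hF i j).mul_const _).const_mul _

lemma iter_quad (hmeas : ∀ k, Measurable (A k))
    (hindep : iIndepFun A μ)
    (hident : ∀ k, μ.map (A k) = μ.map (A 0))
    (hL2 : ∀ i j, MemLp (fun ω => A 0 ω i j) 2 μ)
    {Φ : ℕ → Ω → Matrix (Fin n) (Fin n) ℝ}
    (hΦ0 : ∀ ω, Φ 0 ω = 1) (hΦS : ∀ k ω, Φ (k + 1) ω = A k ω * Φ k ω)
    (W : Matrix (Fin n) (Fin n) ℝ) (k : ℕ) (x0 : Fin n → ℝ) :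
    x0 ⬝ᵥ ((Texp μ (A 0))^[k] W) *ᵥ x0
      = ∫ ω, (Φ k ω *ᵥ x0) ⬝ᵥ W *ᵥ (Φ k ω *ᵥ x0) ∂μ := by
  have hΦL2 := fun i j => phi_entry_L2 hmeas hindep hident hL2 hΦ0 hΦS k i j
  rw [← phi_expectation hmeas hindep hident hL2 hΦ0 hΦS W k]
  rw [quad_integral (fun i j => quad_integrable hΦL2 W i j) x0]
  apply integral_congr_ae
  filter_upwards with ω
  exact quad_as_vec (Φ k ω) W x0

lemma backward_dir (hmeas : ∀ k, Measurable (A k))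
    (hindep : iIndepFun A μ)
    (hident : ∀ k, μ.map (A k) = μ.map (A 0))
    (hL2 : ∀ i j, MemLp (fun ω => A 0 ω i j) 2 μ)
    {Φ : ℕ → Ω → Matrix (Fin n) (Fin n) ℝ}
    (hΦ0 : ∀ ω, Φ 0 ω = 1) (hΦS : ∀ k ω, Φ (k + 1) ω = A k ω * Φ k ω)
    {P : Matrix (Fin n) (Fin n) ℝ} {lam : ℝ} (hlam : lam ∈ Set.Ioo (0:ℝ) 1)
    (hP : P.PosDef)
    (hpsd : (lam ^ 2 • P - Texp μ (A 0) P).PosSemidef) :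
    ∃ a > (0 : ℝ), ∃ l ∈ Set.Ioo (0 : ℝ) 1, ∀ (x0 : Fin n → ℝ) (k : ℕ),
        Real.sqrt (∫ ω, ∑ i, ((Φ k ω).mulVec x0 i) ^ 2 ∂μ)
          ≤ a * Real.sqrt (∑ i, x0 i ^ 2) * l ^ k := by
  obtain ⟨c1, hc1, hlow⟩ := posdef_lower hP
  obtain ⟨c2, hc2, hupp⟩ := posdef_upper P
  refine ⟨Real.sqrt (c2 / c1), Real.sqrt_pos.mpr (by positivity), lam, hlam, fun x0 k => ?_⟩
  have hΦL2 := fun k i j => phi_entry_L2 hmeas hindep hident hL2 hΦ0 hΦS k i j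
  set T := Texp μ (A 0) with hT
  set I : ℕ → ℝ := fun k => x0 ⬝ᵥ (T^[k] P) *ᵥ x0 with hI
  have hiq : ∀ (W : Matrix (Fin n) (Fin n) ℝ) (k : ℕ), x0 ⬝ᵥ (T^[k] W) *ᵥ x0
      = ∫ ω, (Φ k ω *ᵥ x0) ⬝ᵥ W *ᵥ (Φ k ω *ᵥ x0) ∂μ :=
    fun W k => iter_quad hmeas hindep hident hL2 hΦ0 hΦS W k x0
  have hint : ∀ (W : Matrix (Fin n) (Fin n) ℝ) (k : ℕ),
      Integrable (fun ω => (Φ k ω *ᵥ x0) ⬝ᵥ W *ᵥ (Φ k ω *ᵥ x0)) μ := by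
    intro W k
    have := quad_integrable_vec (μ := μ)
      (F := fun ω => (Φ k ω)ᵀ * W * Φ k ω) (fun i j => quad_integrable (hΦL2 k) W i j) x0
    apply this.congr
    filter_upwards with ω
    exact quad_as_vec (Φ k ω) W x0
  -- one-step contraction
  have hstep : ∀ k, I (k + 1) ≤ lam ^ 2 * I k := by
    intro k
    have h1 : I (k + 1) = ∫ ω, (Φ k ω *ᵥ x0) ⬝ᵥ (T P) *ᵥ (Φ k ω *ᵥ x0) ∂μ := by
      simp only [hI]; rw [Function.iterate_succ_apply]; exact hiq (T P) k
    have h2 : lam ^ 2 * I k = ∫ ω, (Φ k ω *ᵥ x0) ⬝ᵥ (lam ^ 2 • P) *ᵥ (Φ k ω *ᵥ x0) ∂μ := by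
      simp only [hI]; rw [hiq P k, ← integral_const_mul]
      apply integral_congr_ae
      filter_upwards with ω
      rw [Matrix.smul_mulVec, dotProduct_smul, smul_eq_mul]
    rw [h1, h2]
    apply integral_mono (hint (T P) k) (hint (lam ^ 2 • P) k)
    intro ω
    have := hpsd.dotProduct_mulVec_nonneg (Φ k ω *ᵥ x0)
    have hstar : star (Φ k ω *ᵥ x0) = Φ k ω *ᵥ x0 := by
      funext i; simp
    rw [hstar, Matrix.sub_mulVec, dotProduct_sub] at this
    linarith
  -- iterate
  have hiter : ∀ k, I k ≤ (lam ^ 2) ^ k * I 0 := by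
    intro k
    induction k with
    | zero => simp
    | succ k ih =>
        have h0 : 0 ≤ lam ^ 2 := sq_nonneg lam
        calc I (k + 1) ≤ lam ^ 2 * I k := hstep k
          _ ≤ lam ^ 2 * ((lam ^ 2) ^ k * I 0) := by
              apply mul_le_mul_of_nonneg_left ih h0
          _ = (lam ^ 2) ^ (k + 1) * I 0 := by ring
  have hI0 : I 0 ≤ c2 * ∑ i, x0 i ^ 2 := by
    simp only [hI]
    simpa using hupp x0
  -- compare with the Euclidean norm
  have hcmp : ∀ k, c1 * ∫ ω, ∑ i, ((Φ k ω).mulVec x0 i) ^ 2 ∂μ ≤ I k := by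
    intro k
    simp only [hI]
    rw [hiq P k, ← integral_const_mul]
    have hone : Integrable (fun ω => c1 * ∑ i, ((Φ k ω).mulVec x0 i) ^ 2) μ := by
      apply ((hint 1 k).const_mul c1).congr
      filter_upwards with ω
      congr 1
      rw [Matrix.one_mulVec]
      simp [dotProduct, sq]
    apply integral_mono hone (hint P k)
    intro ω
    exact hlow (Φ k ω *ᵥ x0)
  -- put the pieces together
  set X := ∫ ω, ∑ i, ((Φ k ω).mulVec x0 i) ^ 2 ∂μ with hX
  set S := ∑ i, x0 i ^ 2 with hSdef
  have hS0 : 0 ≤ S := Finset.sum_nonneg fun i _ => sq_nonneg _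
  have hmain : X ≤ (c2 / c1) * S * (lam ^ 2) ^ k := by
    have h1 := hcmp k
    have hIk : I k ≤ (lam ^ 2) ^ k * (c2 * S) := by
      calc I k ≤ (lam ^ 2) ^ k * I 0 := hiter k
        _ ≤ (lam ^ 2) ^ k * (c2 * S) := by
            apply mul_le_mul_of_nonneg_left hI0 (by positivity)
    have h2 : c1 * X ≤ (lam ^ 2) ^ k * (c2 * S) := le_trans h1 hIk
    rw [div_mul_eq_mul_div, div_mul_eq_mul_div, le_div_iff₀ hc1]
    nlinarith
  have hX0 : 0 ≤ X := by
    rw [hX]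
    exact integral_nonneg fun ω => Finset.sum_nonneg fun i _ => sq_nonneg _
  set R := Real.sqrt (c2 / c1) * Real.sqrt S * lam ^ k with hR
  have hR0 : 0 ≤ R := by
    have := Real.sqrt_nonneg (c2 / c1)
    have := Real.sqrt_nonneg S
    have : (0:ℝ) ≤ lam ^ k := pow_nonneg hlam.1.le k
    positivity
  have hR2 : R ^ 2 = (c2 / c1) * S * (lam ^ 2) ^ k := by
    have h1 : Real.sqrt (c2 / c1) ^ 2 = c2 / c1 := Real.sq_sqrt (by positivity)
    have h2 : Real.sqrt S ^ 2 = S := Real.sq_sqrt hS0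
    have h3 : (lam ^ k) ^ 2 = (lam ^ 2) ^ k := by
      rw [← pow_mul, ← pow_mul, mul_comm]
    calc R ^ 2 = Real.sqrt (c2 / c1) ^ 2 * Real.sqrt S ^ 2 * (lam ^ k) ^ 2 := by
          rw [hR]; ring
      _ = (c2 / c1) * S * (lam ^ 2) ^ k := by rw [h1, h2, h3]
  calc Real.sqrt X ≤ Real.sqrt (R ^ 2) := Real.sqrt_le_sqrt (by rw [hR2]; exact hmain)
    _ = R := Real.sqrt_sq hR0

lemma herm_of_symm {M : Matrix (Fin n) (Fin n) ℝ} (h : ∀ i j, M i j = M j i) :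
    M.IsHermitian := by
  ext i j
  rw [Matrix.conjTranspose_apply]
  simp [h j i]

lemma Texp_zero (hL2 : ∀ i j, MemLp (fun ω => A 0 ω i j) 2 μ) :
    Texp μ (A 0) (0 : Matrix (Fin n) (Fin n) ℝ) = 0 := by
  ext p q
  simp [Texp]

lemma Texp_add (hL2 : ∀ i j, MemLp (fun ω => A 0 ω i j) 2 μ)
    (W W' : Matrix (Fin n) (Fin n) ℝ) :
    Texp μ (A 0) (W + W') = Texp μ (A 0) W + Texp μ (A 0) W' := by
  ext p q
  simp only [Texp, Matrix.of_apply, Matrix.add_apply]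
  rw [← integral_add (quad_integrable hL2 W p q) (quad_integrable hL2 W' p q)]
  apply integral_congr_ae
  filter_upwards with ω
  simp [Matrix.mul_add, Matrix.add_mul]

lemma Texp_smul (c : ℝ) (W : Matrix (Fin n) (Fin n) ℝ) :
    Texp μ (A 0) (c • W) = c • Texp μ (A 0) W := by
  ext p q
  simp only [Texp, Matrix.of_apply, Matrix.smul_apply, smul_eq_mul]
  rw [← integral_const_mul]
  apply integral_congr_ae
  filter_upwards with ω
  have : (A 0 ω)ᵀ * (c • W) * A 0 ω = c • ((A 0 ω)ᵀ * W * A 0 ω) := by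
    rw [Matrix.mul_smul, Matrix.smul_mul]
  rw [this, Matrix.smul_apply, smul_eq_mul]

lemma Texp_sum (hL2 : ∀ i j, MemLp (fun ω => A 0 ω i j) 2 μ)
    (s : Finset ℕ) (f : ℕ → Matrix (Fin n) (Fin n) ℝ) :
    Texp μ (A 0) (∑ k ∈ s, f k) = ∑ k ∈ s, Texp μ (A 0) (f k) := by
  classical
  induction s using Finset.cons_induction with
  | empty => simpa using Texp_zero hL2
  | cons k s hk ih =>
      rw [Finset.sum_cons, Finset.sum_cons, Texp_add hL2, ih]

lemma Texp_herm {W : Matrix (Fin n) (Fin n) ℝ} (hW : W.IsHermitian) :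
    (Texp μ (A 0) W).IsHermitian := by
  apply herm_of_symm
  intro i j
  simp only [Texp, Matrix.of_apply]
  apply integral_congr_ae
  filter_upwards with ω
  have hWs : Wᵀ = W := by
    have := hW
    rw [Matrix.IsHermitian] at this
    calc Wᵀ = Wᴴ := by ext p q; simp [Matrix.conjTranspose_apply, Matrix.transpose_apply]
      _ = W := this
  have : ((A 0 ω)ᵀ * W * A 0 ω)ᵀ = (A 0 ω)ᵀ * W * A 0 ω := by
    rw [Matrix.transpose_mul, Matrix.transpose_mul, Matrix.transpose_transpose, hWs,
      Matrix.mul_assoc]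
  calc ((A 0 ω)ᵀ * W * A 0 ω) i j = (((A 0 ω)ᵀ * W * A 0 ω)ᵀ) j i := rfl
    _ = ((A 0 ω)ᵀ * W * A 0 ω) j i := by rw [this]

lemma forward_dir (hmeas : ∀ k, Measurable (A k))
    (hindep : iIndepFun A μ)
    (hident : ∀ k, μ.map (A k) = μ.map (A 0))
    (hL2 : ∀ i j, MemLp (fun ω => A 0 ω i j) 2 μ)
    {Φ : ℕ → Ω → Matrix (Fin n) (Fin n) ℝ}
    (hΦ0 : ∀ ω, Φ 0 ω = 1) (hΦS : ∀ k ω, Φ (k + 1) ω = A k ω * Φ k ω)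
    {a lam : ℝ} (ha : 0 < a) (hlam : lam ∈ Set.Ioo (0:ℝ) 1)
    (hstab : ∀ (x0 : Fin n → ℝ) (k : ℕ),
        Real.sqrt (∫ ω, ∑ i, ((Φ k ω).mulVec x0 i) ^ 2 ∂μ)
          ≤ a * Real.sqrt (∑ i, x0 i ^ 2) * lam ^ k) :
    ∃ (P : Matrix (Fin n) (Fin n) ℝ), ∃ l ∈ Set.Ioo (0 : ℝ) 1, P.PosDef ∧
        (l ^ 2 • P - Texp μ (A 0) P).PosSemidef := by
  obtain ⟨hlam0, hlam1⟩ := hlam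
  set T := Texp μ (A 0) with hT
  set Q : ℕ → Matrix (Fin n) (Fin n) ℝ := fun k => T^[k] (1 : Matrix (Fin n) (Fin n) ℝ) with hQ
  -- quadratic form of Q k
  have hq : ∀ (k : ℕ) (x : Fin n → ℝ), x ⬝ᵥ (Q k) *ᵥ x
      = ∫ ω, ∑ i, ((Φ k ω).mulVec x i) ^ 2 ∂μ := by
    intro k x
    simp only [hQ, hT]
    rw [iter_quad hmeas hindep hident hL2 hΦ0 hΦS 1 k x]
    apply integral_congr_ae
    filter_upwards with ω
    rw [Matrix.one_mulVec]
    simp [dotProduct, sq]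
  have hqnn : ∀ (k : ℕ) (x : Fin n → ℝ), 0 ≤ x ⬝ᵥ (Q k) *ᵥ x := by
    intro k x
    rw [hq]
    exact integral_nonneg fun ω => Finset.sum_nonneg fun i _ => sq_nonneg _
  have hqbd : ∀ (k : ℕ) (x : Fin n → ℝ),
      x ⬝ᵥ (Q k) *ᵥ x ≤ a ^ 2 * (∑ i, x i ^ 2) * (lam ^ 2) ^ k := by
    intro k x
    have hS0 : (0:ℝ) ≤ ∑ i, x i ^ 2 := Finset.sum_nonneg fun i _ => sq_nonneg _
    have h1 := hstab x k
    have h2 : x ⬝ᵥ (Q k) *ᵥ x = Real.sqrt (x ⬝ᵥ (Q k) *ᵥ x) ^ 2 :=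
      (Real.sq_sqrt (hqnn k x)).symm
    rw [h2, hq k x]
    have hRHS0 : 0 ≤ a * Real.sqrt (∑ i, x i ^ 2) * lam ^ k := by positivity
    calc Real.sqrt (∫ ω, ∑ i, ((Φ k ω).mulVec x i) ^ 2 ∂μ) ^ 2
        ≤ (a * Real.sqrt (∑ i, x i ^ 2) * lam ^ k) ^ 2 := by
          apply pow_le_pow_left₀ (Real.sqrt_nonneg _) h1
      _ = a ^ 2 * Real.sqrt (∑ i, x i ^ 2) ^ 2 * (lam ^ k) ^ 2 := by ring
      _ = a ^ 2 * (∑ i, x i ^ 2) * (lam ^ 2) ^ k := by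
          rw [Real.sq_sqrt hS0, ← pow_mul, ← pow_mul, mul_comm 2 k]
  have hqherm : ∀ k, (Q k).IsHermitian := by
    intro k
    induction k with
    | zero => simpa [hQ] using Matrix.isHermitian_one
    | succ k ih =>
        have : Q (k+1) = T (Q k) := by
          simp only [hQ]
          rw [Function.iterate_succ_apply']
        rw [this, hT]
        exact Texp_herm ih
  have hqpsd : ∀ k, (Q k).PosSemidef := by
    intro k
    refine Matrix.PosSemidef.of_dotProduct_mulVec_nonneg (hqherm k) fun x => ?_
    have hs : star x = x := by funext i; simp
    rw [hs]
    exact hqnn k x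
  -- choose N large enough
  obtain ⟨N, hN⟩ := exists_pow_lt_of_lt_one (show (0:ℝ) < 1 / a ^ 2 by positivity) hlam1
  have hNle : a ^ 2 * lam ^ (N + 1) ≤ 1 := by
    have h1 : lam ^ (N + 1) ≤ lam ^ N := pow_le_pow_of_le_one hlam0.le hlam1.le (Nat.le_succ N)
    rw [lt_div_iff₀ (by positivity)] at hN
    nlinarith [pow_nonneg hlam0.le N, pow_nonneg hlam0.le (N + 1)]
  have hlamne : lam ≠ 0 := ne_of_gt hlam0
  set P : Matrix (Fin n) (Fin n) ℝ := ∑ k ∈ Finset.range (N + 1), (lam⁻¹) ^ k • Q k with hP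
  set l := Real.sqrt lam with hl
  have hl2 : l ^ 2 = lam := Real.sq_sqrt hlam0.le
  have hlIoo : l ∈ Set.Ioo (0:ℝ) 1 := by
    constructor
    · exact Real.sqrt_pos.mpr hlam0
    · rw [hl, show (1:ℝ) = Real.sqrt 1 by simp]
      exact Real.sqrt_lt_sqrt hlam0.le hlam1
  have hpsd_smul : ∀ (M : Matrix (Fin n) (Fin n) ℝ) (c : ℝ), M.PosSemidef → 0 ≤ c →
      (c • M).PosSemidef := by
    intro M c hM hc
    refine Matrix.PosSemidef.of_dotProduct_mulVec_nonneg ?_ ?_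
    · rw [Matrix.IsHermitian, Matrix.conjTranspose_smul]
      rw [hM.1]
      congr 1
    · intro x
      rw [Matrix.smul_mulVec, dotProduct_smul, smul_eq_mul]
      exact mul_nonneg hc (hM.dotProduct_mulVec_nonneg x)
  refine ⟨P, l, hlIoo, ?_, ?_⟩
  · -- PosDef
    have hsplit : P = (∑ k ∈ Finset.range N, (lam⁻¹) ^ (k + 1) • Q (k + 1)) + 1 := by
      rw [hP, Finset.sum_range_succ']
      simp [hQ]
    rw [hsplit]
    have hsum : (∑ k ∈ Finset.range N, (lam⁻¹) ^ (k + 1) • Q (k + 1)).PosSemidef := by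
      classical
      induction (Finset.range N) using Finset.cons_induction with
      | empty => simpa using Matrix.PosSemidef.zero
      | cons k s hk ih =>
          rw [Finset.sum_cons]
          exact Matrix.PosSemidef.add
            (hpsd_smul _ _ (hqpsd (k + 1)) (by positivity)) ih
    exact Matrix.PosDef.posSemidef_add hsum Matrix.PosDef.one
  · -- Lyapunov inequality
    rw [hl2]
    set f : ℕ → Matrix (Fin n) (Fin n) ℝ := fun k => (lam * (lam⁻¹) ^ k) • Q k with hf
    have h1 : lam • P = ∑ k ∈ Finset.range (N + 1), f k := by
      rw [hP, Finset.smul_sum]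
      apply Finset.sum_congr rfl
      intro k _
      rw [hf, smul_smul]
    have h2 : T P = ∑ k ∈ Finset.range (N + 1), f (k + 1) := by
      rw [hP, hT, Texp_sum hL2]
      apply Finset.sum_congr rfl
      intro k _
      rw [Texp_smul]
      have hc : lam * lam⁻¹ ^ (k + 1) = lam⁻¹ ^ k := by
        rw [pow_succ]
        field_simp
      have hQs : Texp μ (A 0) (Q k) = Q (k + 1) := by
        simp only [hQ]
        rw [Function.iterate_succ_apply']
      simp only [hf, hc, hQs]
    have h3 : lam • P - T P = f 0 - f (N + 1) := by
      rw [h1, h2]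
      have hA : ∑ k ∈ Finset.range (N + 2), f k
          = (∑ k ∈ Finset.range (N + 1), f (k + 1)) + f 0 := Finset.sum_range_succ' f (N + 1)
      have hB : ∑ k ∈ Finset.range (N + 2), f k
          = (∑ k ∈ Finset.range (N + 1), f k) + f (N + 1) := Finset.sum_range_succ f (N + 1)
      have := hA.symm.trans hB
      -- (∑ f (k+1)) + f 0 = (∑ f k) + f (N+1)
      have hgoal : (∑ k ∈ Finset.range (N + 1), f k)
          = (∑ k ∈ Finset.range (N + 1), f (k + 1)) + f 0 - f (N + 1) := by
        rw [eq_sub_iff_add_eq]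
        exact this.symm
      rw [hgoal]; abel
    rw [h3]
    have hc1 : f 0 = lam • (1 : Matrix (Fin n) (Fin n) ℝ) := by
      rw [hf]
      simp [hQ]
    set c := lam * (lam⁻¹) ^ (N + 1) with hcdef
    have hc0 : 0 ≤ c := by positivity
    have hherm : (f 0 - f (N + 1)).IsHermitian := by
      apply Matrix.IsHermitian.sub
      · exact (hpsd_smul _ _ (hqpsd 0) (by positivity)).1
      · exact (hpsd_smul _ _ (hqpsd (N + 1)) (by positivity)).1
    refine Matrix.PosSemidef.of_dotProduct_mulVec_nonneg hherm fun x => ?_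
    have hs : star x = x := by funext i; simp
    rw [hs]
    set S := ∑ i, x i ^ 2 with hSdef
    have hS0 : 0 ≤ S := Finset.sum_nonneg fun i _ => sq_nonneg _
    have hq0 : x ⬝ᵥ (f 0) *ᵥ x = lam * S := by
      rw [hc1, Matrix.smul_mulVec, dotProduct_smul, smul_eq_mul,
        Matrix.one_mulVec]
      congr 1
      simp [dotProduct, hSdef, sq]
    have hqN : x ⬝ᵥ (f (N + 1)) *ᵥ x = c * (x ⬝ᵥ (Q (N + 1)) *ᵥ x) := by
      rw [hf, Matrix.smul_mulVec, dotProduct_smul, smul_eq_mul]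
    have hbound := hqbd (N + 1) x
    have hpow : c * (lam ^ 2) ^ (N + 1) = lam * lam ^ (N + 1) := by
      have h : lam⁻¹ * lam ^ 2 = lam := by
        rw [sq, inv_mul_cancel_left₀ hlamne]
      rw [hcdef, mul_assoc, ← mul_pow, h]
    have hkey : c * (x ⬝ᵥ (Q (N + 1)) *ᵥ x) ≤ lam * S := by
      calc c * (x ⬝ᵥ (Q (N + 1)) *ᵥ x) ≤ c * (a ^ 2 * S * (lam ^ 2) ^ (N + 1)) :=
            mul_le_mul_of_nonneg_left hbound hc0
        _ = (c * (lam ^ 2) ^ (N + 1)) * (a ^ 2 * S) := by ring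
        _ = lam * lam ^ (N + 1) * (a ^ 2 * S) := by rw [hpow]
        _ ≤ lam * S := by
            have hls : 0 ≤ lam * S := mul_nonneg hlam0.le hS0
            have h := mul_le_mul_of_nonneg_left hNle hls
            calc lam * lam ^ (N + 1) * (a ^ 2 * S)
                = lam * S * (a ^ 2 * lam ^ (N + 1)) := by ring
              _ ≤ lam * S * 1 := h
              _ = lam * S := mul_one _
    rw [Matrix.sub_mulVec, dotProduct_sub, hq0, hqN]
    linarith

end Aux

/-- For i.i.d. square-integrable random matrices A_k and the recursion x_{k+1} = A_k x_k
(x_k = Φ_k x₀ with Φ_k = A_{k-1}···A₀), exponential second-moment stability holds if and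
only if there are a symmetric positive definite P and λ ∈ (0,1) with
λ² P − E[A₀ᵀ P A₀] ⪰ 0. -/
theorem exponential_stability_iff_lyapunov {Ω : Type*} [MeasurableSpace Ω]
    (μ : Measure Ω) [IsProbabilityMeasure μ] {n : ℕ}
    (A : ℕ → Ω → Matrix (Fin n) (Fin n) ℝ)
    (hmeas : ∀ k, Measurable (A k))
    (hindep : iIndepFun A μ)
    (hident : ∀ k, μ.map (A k) = μ.map (A 0))
    (hL2 : ∀ i j, MemLp (fun ω => A 0 ω i j) 2 μ)
    (Φ : ℕ → Ω → Matrix (Fin n) (Fin n) ℝ)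
    (hΦ0 : ∀ ω, Φ 0 ω = 1)
    (hΦS : ∀ k ω, Φ (k + 1) ω = A k ω * Φ k ω) :
    (∃ a > (0 : ℝ), ∃ lam ∈ Set.Ioo (0 : ℝ) 1, ∀ (x0 : Fin n → ℝ) (k : ℕ),
        Real.sqrt (∫ ω, ∑ i, ((Φ k ω).mulVec x0 i) ^ 2 ∂μ)
          ≤ a * Real.sqrt (∑ i, x0 i ^ 2) * lam ^ k) ↔
    (∃ (P : Matrix (Fin n) (Fin n) ℝ), ∃ lam ∈ Set.Ioo (0 : ℝ) 1, P.PosDef ∧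
        (lam ^ 2 • P -
          Matrix.of (fun i j => ∫ ω, ((A 0 ω)ᵀ * P * A 0 ω) i j ∂μ)).PosSemidef) := by
  constructor
  · rintro ⟨a, ha, lam, hlam, hstab⟩
    obtain ⟨P, l, hlI, hPd, hpsd⟩ :=
      forward_dir hmeas hindep hident hL2 hΦ0 hΦS ha hlam hstab
    exact ⟨P, l, hlI, hPd, hpsd⟩
  · rintro ⟨P, lam, hlam, hPd, hpsd⟩
    exact backward_dir hmeas hindep hident hL2 hΦ0 hΦS hlam hPd hpsd
end

section
/- The operator 𝓛(Σ) = E[A_0 Σ A_0^T] on symmetric matrices preserves the positive semidefinite cone, and if there exist P ≻ 0 and λ ∈ (0,1) with 𝓛*(P) := E[A_0^T P A_0] ≤ λ²P, then the spectral radius of 𝓛 is at most λ² < 1. -/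
open MeasureTheory Matrix

variable {n : ℕ}

lemma psd_cauchy_schwarz {P : Matrix (Fin n) (Fin n) ℝ} (hP : P.PosSemidef)
    (x y : Fin n → ℝ) :
    (x ⬝ᵥ P *ᵥ y) ^ 2 ≤ (x ⬝ᵥ P *ᵥ x) * (y ⬝ᵥ P *ᵥ y) := by
  have hsym : y ⬝ᵥ P *ᵥ x = x ⬝ᵥ P *ᵥ y := by
    have hPt : Pᵀ = P := by
      have := hP.1
      simpa [Matrix.IsHermitian, Matrix.conjTranspose_eq_transpose_of_trivial] using this
    calc y ⬝ᵥ P *ᵥ x = y ᵥ* P ⬝ᵥ x := by rw [Matrix.dotProduct_mulVec]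
      _ = (Pᵀ *ᵥ y) ⬝ᵥ x := by rw [← Matrix.mulVec_transpose]
      _ = x ⬝ᵥ Pᵀ *ᵥ y := by rw [dotProduct_comm]
      _ = x ⬝ᵥ P *ᵥ y := by rw [hPt]
  have key : ∀ t : ℝ, 0 ≤ (y ⬝ᵥ P *ᵥ y) * (t * t) + (2 * (x ⬝ᵥ P *ᵥ y)) * t + (x ⬝ᵥ P *ᵥ x) := by
    intro t
    have h0 := hP.dotProduct_mulVec_nonneg (x + t • y)
    simp only [star_trivial, Matrix.mulVec_add, Matrix.mulVec_smul, dotProduct_add,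
      add_dotProduct, dotProduct_smul, smul_dotProduct,
      smul_eq_mul] at h0
    rw [hsym] at h0
    nlinarith [h0]
  have hd := discrim_le_zero key
  simp only [discrim] at hd
  nlinarith [hd]

lemma trace_mul_transpose_mul (D B : Matrix (Fin n) (Fin n) ℝ) :
    (D * (Bᴴ * B)).trace = ∑ k, (fun j => B k j) ⬝ᵥ D *ᵥ (fun j => B k j) := by
  rw [← Matrix.mul_assoc, Matrix.trace_mul_cycle]
  simp only [Matrix.trace, Matrix.diag, Matrix.mul_apply, Matrix.conjTranspose_apply,
    star_trivial, dotProduct, Matrix.mulVec, Finset.mul_sum, Finset.sum_mul]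
  refine Finset.sum_congr rfl fun k _ => ?_
  rw [Finset.sum_comm]
  refine Finset.sum_congr rfl fun i _ => ?_
  refine Finset.sum_congr rfl fun j _ => ?_
  ring

lemma psd_eq_conjTranspose_mul_self {S : Matrix (Fin n) (Fin n) ℝ} (hS : S.PosSemidef) :
    ∃ B : Matrix (Fin n) (Fin n) ℝ, S = Bᴴ * B := by
  classical
  open scoped MatrixOrder in
  obtain ⟨B, rfl⟩ := CStarAlgebra.nonneg_iff_eq_star_mul_self.mp hS.nonneg
  exact ⟨B, rfl⟩

lemma trace_mul_psd_nonneg {D S : Matrix (Fin n) (Fin n) ℝ} (hD : D.PosSemidef)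
    (hS : S.PosSemidef) : 0 ≤ (D * S).trace := by
  obtain ⟨B, rfl⟩ := psd_eq_conjTranspose_mul_self hS
  rw [trace_mul_transpose_mul]
  refine Finset.sum_nonneg fun k _ => ?_
  simpa [star_trivial] using hD.dotProduct_mulVec_nonneg (fun j => B k j)

lemma diag_le_inv_diag_mul_trace {P X : Matrix (Fin n) (Fin n) ℝ} (hP : P.PosDef)
    (hX : X.PosSemidef) (i : Fin n) :
    X i i ≤ P⁻¹ i i * (P * X).trace := by
  obtain ⟨B, rfl⟩ := psd_eq_conjTranspose_mul_self hX
  have hdet : IsUnit P.det := isUnit_iff_ne_zero.mpr hP.det_pos.ne'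
  set u : Fin n → ℝ := P⁻¹ *ᵥ Pi.single i 1 with hu
  have hPu : P *ᵥ u = Pi.single i 1 := by
    rw [hu, Matrix.mulVec_mulVec, Matrix.mul_nonsing_inv _ hdet, Matrix.one_mulVec]
  have huPu : u ⬝ᵥ P *ᵥ u = P⁻¹ i i := by
    rw [hPu]
    simp [hu, Matrix.mulVec, dotProduct, Pi.single_apply]
  have hXii : (Bᴴ * B) i i = ∑ k, (B k i) ^ 2 := by
    simp [Matrix.mul_apply, Matrix.conjTranspose_apply, sq]
  rw [hXii, trace_mul_transpose_mul]
  rw [Finset.mul_sum]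
  refine Finset.sum_le_sum fun k _ => ?_
  have hcs := psd_cauchy_schwarz hP.posSemidef (fun j => B k j) u
  have hru : (fun j => B k j) ⬝ᵥ P *ᵥ u = B k i := by
    rw [hPu]
    simp [dotProduct, Pi.single_apply]
  rw [hru, huPu] at hcs
  nlinarith [hcs]

/-- The operator 𝓛(Σ) = E[A₀ Σ A₀ᵀ] preserves the positive semidefinite cone, and if
there are P ≻ 0 and λ ∈ (0,1) with 𝓛*(P) = E[A₀ᵀ P A₀] ⪯ λ²P, then every (real) spectral
value of 𝓛 has absolute value at most λ² < 1, i.e. the spectral radius of 𝓛 is ≤ λ². -/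
theorem second_moment_operator_spectral_radius {Ω : Type*} [MeasurableSpace Ω]
    (μ : Measure Ω) [IsProbabilityMeasure μ] {n : ℕ}
    (A : Ω → Matrix (Fin n) (Fin n) ℝ)
    (hmeas : Measurable A)
    (hL2 : ∀ i j, MemLp (fun ω => A ω i j) 2 μ)
    (T : Matrix (Fin n) (Fin n) ℝ →ₗ[ℝ] Matrix (Fin n) (Fin n) ℝ)
    (hT : ∀ S : Matrix (Fin n) (Fin n) ℝ,
      T S = Matrix.of fun i j => ∫ ω, (A ω * S * (A ω)ᵀ) i j ∂μ) :
    (∀ S : Matrix (Fin n) (Fin n) ℝ, S.PosSemidef → (T S).PosSemidef) ∧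
    (∀ (P : Matrix (Fin n) (Fin n) ℝ) (lam : ℝ), P.PosDef → lam ∈ Set.Ioo (0 : ℝ) 1 →
      (lam ^ 2 • P -
        Matrix.of (fun i j => ∫ ω, ((A ω)ᵀ * P * A ω) i j ∂μ)).PosSemidef →
      ∀ c ∈ spectrum ℝ (T : Module.End ℝ (Matrix (Fin n) (Fin n) ℝ)),
        |c| ≤ lam ^ 2) := by
  classical
  -- basic integrability of products of entries
  have hIntAA : ∀ i a j b : Fin n, Integrable (fun ω => A ω i a * A ω j b) μ := by
    intro i a j b
    have h := ((hL2 i a).smul (hL2 j b) (p := 2) (q := 2) (r := 1) (hpqr := ⟨by simp [ENNReal.inv_two_add_inv_two]⟩) :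
      MemLp ((fun ω => A ω j b) • (fun ω => A ω i a)) 1 μ)
    have h2 := memLp_one_iff_integrable.mp h
    simpa [Pi.smul_apply', smul_eq_mul, mul_comm, Pi.mul_def] using h2
  -- integrability of the entries of A ω * S * (A ω)ᵀ
  have hIntL : ∀ (S : Matrix (Fin n) (Fin n) ℝ) (i j : Fin n),
      Integrable (fun ω => (A ω * S * (A ω)ᵀ) i j) μ := by
    intro S i j
    have hfun : (fun ω => (A ω * S * (A ω)ᵀ) i j)
        = fun ω => ∑ b, ∑ a, S a b * (A ω i a * A ω j b) := by
      funext ω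
      simp only [Matrix.mul_apply, Matrix.transpose_apply, Finset.sum_mul]
      refine Finset.sum_congr rfl fun b _ => Finset.sum_congr rfl fun a _ => by ring
    rw [hfun]
    exact integrable_finset_sum _ fun b _ => integrable_finset_sum _ fun a _ =>
      (hIntAA i a j b).const_mul _
  -- integrability of the entries of (A ω)ᵀ * P * A ω
  have hIntR : ∀ (P : Matrix (Fin n) (Fin n) ℝ) (i j : Fin n),
      Integrable (fun ω => ((A ω)ᵀ * P * A ω) i j) μ := by
    intro P i j
    have hfun : (fun ω => ((A ω)ᵀ * P * A ω) i j)
        = fun ω => ∑ b, ∑ a, P a b * (A ω a i * A ω b j) := by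
      funext ω
      simp only [Matrix.mul_apply, Matrix.transpose_apply, Finset.sum_mul]
      refine Finset.sum_congr rfl fun b _ => Finset.sum_congr rfl fun a _ => by ring
    rw [hfun]
    exact integrable_finset_sum _ fun b _ => integrable_finset_sum _ fun a _ =>
      (hIntAA a i b j).const_mul _
  -- swap of quadratic forms and integrals
  have hswap : ∀ (F : Ω → Matrix (Fin n) (Fin n) ℝ),
      (∀ i j, Integrable (fun ω => F ω i j) μ) →
      ∀ v w : Fin n → ℝ,
        v ⬝ᵥ (Matrix.of fun i j => ∫ ω, F ω i j ∂μ) *ᵥ w = ∫ ω, v ⬝ᵥ (F ω) *ᵥ w ∂μ := by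
    intro F hF v w
    calc v ⬝ᵥ (Matrix.of fun i j => ∫ ω, F ω i j ∂μ) *ᵥ w
        = ∑ i, ∑ j, v i * ((∫ ω, F ω i j ∂μ) * w j) := by
          simp [dotProduct, Matrix.mulVec, Finset.mul_sum]
      _ = ∑ i, ∑ j, ∫ ω, v i * (F ω i j * w j) ∂μ := by
          refine Finset.sum_congr rfl fun i _ => Finset.sum_congr rfl fun j _ => ?_
          rw [← integral_mul_const, ← integral_const_mul]
      _ = ∑ i, ∫ ω, ∑ j, v i * (F ω i j * w j) ∂μ := by
          refine Finset.sum_congr rfl fun i _ => ?_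
          rw [integral_finset_sum _ fun j _ => (((hF i j).mul_const (w j)).const_mul (v i))]
      _ = ∫ ω, ∑ i, ∑ j, v i * (F ω i j * w j) ∂μ := by
          rw [integral_finset_sum _ fun i _ => integrable_finset_sum _ fun j _ =>
            (((hF i j).mul_const (w j)).const_mul (v i))]
      _ = ∫ ω, v ⬝ᵥ (F ω) *ᵥ w ∂μ := by
          refine integral_congr_ae (Filter.Eventually.of_forall fun ω => ?_)
          simp [dotProduct, Matrix.mulVec, Finset.mul_sum]
  -- swap of traces and integrals
  have htrace : ∀ (C : Matrix (Fin n) (Fin n) ℝ) (F : Ω → Matrix (Fin n) (Fin n) ℝ),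
      (∀ i j, Integrable (fun ω => F ω i j) μ) →
      (C * (Matrix.of fun i j => ∫ ω, F ω i j ∂μ)).trace = ∫ ω, (C * F ω).trace ∂μ := by
    intro C F hF
    calc (C * (Matrix.of fun i j => ∫ ω, F ω i j ∂μ)).trace
        = ∑ i, ∑ j, C i j * (∫ ω, F ω j i ∂μ) := by
          simp [Matrix.trace, Matrix.diag, Matrix.mul_apply]
      _ = ∑ i, ∑ j, ∫ ω, C i j * F ω j i ∂μ := by
          refine Finset.sum_congr rfl fun i _ => Finset.sum_congr rfl fun j _ => ?_
          rw [← integral_const_mul]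
      _ = ∑ i, ∫ ω, ∑ j, C i j * F ω j i ∂μ := by
          refine Finset.sum_congr rfl fun i _ => ?_
          rw [integral_finset_sum _ fun j _ => ((hF j i).const_mul (C i j))]
      _ = ∫ ω, ∑ i, ∑ j, C i j * F ω j i ∂μ := by
          rw [integral_finset_sum _ fun i _ => integrable_finset_sum _ fun j _ =>
            ((hF j i).const_mul (C i j))]
      _ = ∫ ω, (C * F ω).trace ∂μ := by
          refine integral_congr_ae (Filter.Eventually.of_forall fun ω => ?_)
          simp [Matrix.trace, Matrix.diag, Matrix.mul_apply]
  -- pointwise congruence identity for quadratic forms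
  have hcongr : ∀ (X B : Matrix (Fin n) (Fin n) ℝ) (v w : Fin n → ℝ),
      v ⬝ᵥ (B * X * Bᵀ) *ᵥ w = (Bᵀ *ᵥ v) ⬝ᵥ X *ᵥ (Bᵀ *ᵥ w) := by
    intro X B v w
    rw [← Matrix.mulVec_mulVec, ← Matrix.mulVec_mulVec, Matrix.dotProduct_mulVec v B,
      ← Matrix.mulVec_transpose]
  -- integrability of quadratic forms
  have hQint : ∀ (F : Ω → Matrix (Fin n) (Fin n) ℝ),
      (∀ i j, Integrable (fun ω => F ω i j) μ) → ∀ v w : Fin n → ℝ,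
      Integrable (fun ω => v ⬝ᵥ (F ω) *ᵥ w) μ := by
    intro F hF v w
    have hfun : (fun ω => v ⬝ᵥ (F ω) *ᵥ w) = fun ω => ∑ i, ∑ j, v i * (F ω i j * w j) := by
      funext ω; simp [dotProduct, Matrix.mulVec, Finset.mul_sum]
    rw [hfun]
    exact integrable_finset_sum _ fun i _ => integrable_finset_sum _ fun j _ =>
      (((hF i j).mul_const (w j)).const_mul (v i))
  -- Part 1 : T preserves PSD
  have hpart1 : ∀ S : Matrix (Fin n) (Fin n) ℝ, S.PosSemidef → (T S).PosSemidef := by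
    intro S hS
    have hSt : Sᵀ = S := by
      have := hS.1
      simpa [Matrix.IsHermitian, Matrix.conjTranspose_eq_transpose_of_trivial] using this
    refine Matrix.PosSemidef.of_dotProduct_mulVec_nonneg ?_ ?_
    · -- Hermitian
      rw [hT]
      ext i j
      simp only [Matrix.conjTranspose_apply, Matrix.of_apply, star_trivial]
      refine integral_congr_ae (Filter.Eventually.of_forall fun ω => ?_)
      have h1 : (A ω * S * (A ω)ᵀ)ᵀ = A ω * S * (A ω)ᵀ := by
        rw [Matrix.transpose_mul, Matrix.transpose_mul, Matrix.transpose_transpose, hSt,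
          Matrix.mul_assoc]
      calc (A ω * S * (A ω)ᵀ) j i = (A ω * S * (A ω)ᵀ)ᵀ i j := rfl
        _ = (A ω * S * (A ω)ᵀ) i j := by rw [h1]
    · intro x
      rw [hT]
      simp only [star_trivial]
      rw [hswap _ (hIntL S) x x]
      refine integral_nonneg fun ω => ?_
      rw [hcongr]
      simpa [star_trivial] using hS.dotProduct_mulVec_nonneg ((A ω)ᵀ *ᵥ x)
  refine ⟨hpart1, ?_⟩
  -- Part 2
  intro P lam hP hlam hLyap c hc
  set Q : Matrix (Fin n) (Fin n) ℝ :=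
    Matrix.of (fun i j => ∫ ω, ((A ω)ᵀ * P * A ω) i j ∂μ) with hQ
  -- the trace contraction
  have hcontr : ∀ S : Matrix (Fin n) (Fin n) ℝ, S.PosSemidef →
      (P * T S).trace ≤ lam ^ 2 * (P * S).trace := by
    intro S hSp
    have h1 : (P * T S).trace = ∫ ω, (P * (A ω * S * (A ω)ᵀ)).trace ∂μ := by
      rw [hT]; exact htrace P _ (hIntL S)
    have h2 : ∀ ω, (P * (A ω * S * (A ω)ᵀ)).trace = (S * ((A ω)ᵀ * P * A ω)).trace := by
      intro ω
      rw [show P * (A ω * S * (A ω)ᵀ) = (P * A ω * S) * (A ω)ᵀ by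
        simp [Matrix.mul_assoc]]
      rw [Matrix.trace_mul_comm]
      rw [show (A ω)ᵀ * (P * A ω * S) = ((A ω)ᵀ * P * A ω) * S by
        simp [Matrix.mul_assoc]]
      rw [Matrix.trace_mul_comm]
    have h3 : (P * T S).trace = (S * Q).trace := by
      rw [h1]
      calc ∫ ω, (P * (A ω * S * (A ω)ᵀ)).trace ∂μ
          = ∫ ω, (S * ((A ω)ᵀ * P * A ω)).trace ∂μ :=
            integral_congr_ae (Filter.Eventually.of_forall fun ω => h2 ω)
        _ = (S * Q).trace := (htrace S _ (hIntR P)).symm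
    have h4 : 0 ≤ ((lam ^ 2 • P - Q) * S).trace := trace_mul_psd_nonneg hLyap hSp
    have h5 : ((lam ^ 2 • P - Q) * S).trace = lam ^ 2 * (P * S).trace - (Q * S).trace := by
      rw [Matrix.sub_mul, Matrix.trace_sub, Matrix.smul_mul, Matrix.trace_smul]
      simp [smul_eq_mul]
    rw [h3, Matrix.trace_mul_comm]
    linarith
  -- find an eigenvector
  obtain ⟨M, hM0, hMc⟩ : ∃ M : Matrix (Fin n) (Fin n) ℝ, M ≠ 0 ∧ T M = c • M := by
    have h := Module.End.hasEigenvalue_iff_mem_spectrum.mpr hc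
    obtain ⟨M, hM⟩ := h.exists_hasEigenvector
    exact ⟨M, hM.2, hM.apply_eq_smul⟩
  obtain ⟨i0, j0, hij⟩ : ∃ i j, M i j ≠ 0 := by
    by_contra h
    push_neg at h
    exact hM0 (by ext i j; simpa using h i j)
  set r : ℝ := ∑ i, ∑ j, |M i j| with hr
  have hr0 : 0 ≤ r := Finset.sum_nonneg fun i _ => Finset.sum_nonneg fun j _ => abs_nonneg _
  -- initial domination
  have hDom0 : ∀ v w : Fin n → ℝ,
      0 ≤ v ⬝ᵥ (r • (1 : Matrix (Fin n) (Fin n) ℝ)) *ᵥ v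
        + w ⬝ᵥ (r • (1 : Matrix (Fin n) (Fin n) ℝ)) *ᵥ w + 2 * (v ⬝ᵥ M *ᵥ w) := by
    intro v w
    have hq : ∀ u : Fin n → ℝ,
        u ⬝ᵥ (r • (1 : Matrix (Fin n) (Fin n) ℝ)) *ᵥ u = r * ∑ k, u k ^ 2 := by
      intro u
      rw [Matrix.smul_mulVec, Matrix.one_mulVec, dotProduct_smul, smul_eq_mul]
      simp [dotProduct, sq]
    have habs : |v ⬝ᵥ M *ᵥ w| ≤ r * (((∑ k, v k ^ 2) + ∑ k, w k ^ 2) / 2) := by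
      have h1 : v ⬝ᵥ M *ᵥ w = ∑ i, ∑ j, v i * (M i j * w j) := by
        simp [dotProduct, Matrix.mulVec, Finset.mul_sum]
      rw [h1]
      have h2 : |∑ i, ∑ j, v i * (M i j * w j)| ≤ ∑ i, ∑ j, |v i * (M i j * w j)| :=
        (Finset.abs_sum_le_sum_abs _ _).trans
          (Finset.sum_le_sum fun i _ => Finset.abs_sum_le_sum_abs _ _)
      refine h2.trans ?_
      have h3 : ∀ i j, |v i * (M i j * w j)|
          ≤ |M i j| * (((∑ k, v k ^ 2) + ∑ k, w k ^ 2) / 2) := by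
        intro i j
        have hv : v i ^ 2 ≤ ∑ k, v k ^ 2 :=
          Finset.single_le_sum (f := fun k => v k ^ 2) (fun k _ => sq_nonneg _)
            (Finset.mem_univ i)
        have hw : w j ^ 2 ≤ ∑ k, w k ^ 2 :=
          Finset.single_le_sum (f := fun k => w k ^ 2) (fun k _ => sq_nonneg _)
            (Finset.mem_univ j)
        have he : |v i * (M i j * w j)| = |M i j| * (|v i| * |w j|) := by
          rw [abs_mul, abs_mul]; ring
        rw [he]
        refine mul_le_mul_of_nonneg_left ?_ (abs_nonneg _)
        nlinarith [sq_abs (v i), sq_abs (w j), abs_nonneg (v i), abs_nonneg (w j),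
          sq_nonneg (|v i| - |w j|)]
      calc ∑ i, ∑ j, |v i * (M i j * w j)|
          ≤ ∑ i, ∑ j, |M i j| * (((∑ k, v k ^ 2) + ∑ k, w k ^ 2) / 2) :=
            Finset.sum_le_sum fun i _ => Finset.sum_le_sum fun j _ => h3 i j
        _ = r * (((∑ k, v k ^ 2) + ∑ k, w k ^ 2) / 2) := by
            rw [hr, Finset.sum_mul]
            exact Finset.sum_congr rfl fun i _ => by rw [Finset.sum_mul]
    rw [hq, hq]
    have := abs_le.mp habs
    nlinarith [this.1, this.2]
  -- the inductive step of domination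
  have hstep : ∀ (S N : Matrix (Fin n) (Fin n) ℝ),
      (∀ v w : Fin n → ℝ, 0 ≤ v ⬝ᵥ S *ᵥ v + w ⬝ᵥ S *ᵥ w + 2 * (v ⬝ᵥ N *ᵥ w)) →
      (∀ v w : Fin n → ℝ,
        0 ≤ v ⬝ᵥ (T S) *ᵥ v + w ⬝ᵥ (T S) *ᵥ w + 2 * (v ⬝ᵥ (T N) *ᵥ w)) := by
    intro S N h v w
    rw [hT S, hT N]
    rw [hswap _ (hIntL S) v v, hswap _ (hIntL S) w w, hswap _ (hIntL N) v w]
    have hf := hQint _ (hIntL S) v v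
    have hg := hQint _ (hIntL S) w w
    have hh := hQint _ (hIntL N) v w
    have heq : ∫ ω, (v ⬝ᵥ (A ω * S * (A ω)ᵀ) *ᵥ v + w ⬝ᵥ (A ω * S * (A ω)ᵀ) *ᵥ w
        + 2 * (v ⬝ᵥ (A ω * N * (A ω)ᵀ) *ᵥ w)) ∂μ
        = (∫ ω, v ⬝ᵥ (A ω * S * (A ω)ᵀ) *ᵥ v ∂μ) + (∫ ω, w ⬝ᵥ (A ω * S * (A ω)ᵀ) *ᵥ w ∂μ)
          + 2 * (∫ ω, v ⬝ᵥ (A ω * N * (A ω)ᵀ) *ᵥ w ∂μ) := by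
      calc ∫ ω, (v ⬝ᵥ (A ω * S * (A ω)ᵀ) *ᵥ v + w ⬝ᵥ (A ω * S * (A ω)ᵀ) *ᵥ w
          + 2 * (v ⬝ᵥ (A ω * N * (A ω)ᵀ) *ᵥ w)) ∂μ
          = (∫ ω, (v ⬝ᵥ (A ω * S * (A ω)ᵀ) *ᵥ v + w ⬝ᵥ (A ω * S * (A ω)ᵀ) *ᵥ w) ∂μ)
            + ∫ ω, 2 * (v ⬝ᵥ (A ω * N * (A ω)ᵀ) *ᵥ w) ∂μ :=
            integral_add (hf.add hg) (hh.const_mul 2)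
        _ = (∫ ω, v ⬝ᵥ (A ω * S * (A ω)ᵀ) *ᵥ v ∂μ) + (∫ ω, w ⬝ᵥ (A ω * S * (A ω)ᵀ) *ᵥ w ∂μ)
            + 2 * (∫ ω, v ⬝ᵥ (A ω * N * (A ω)ᵀ) *ᵥ w ∂μ) := by
            rw [integral_add hf hg, integral_const_mul]
    have hpt : ∀ ω, 0 ≤ v ⬝ᵥ (A ω * S * (A ω)ᵀ) *ᵥ v + w ⬝ᵥ (A ω * S * (A ω)ᵀ) *ᵥ w
        + 2 * (v ⬝ᵥ (A ω * N * (A ω)ᵀ) *ᵥ w) := by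
      intro ω
      rw [hcongr S, hcongr S, hcongr N]
      exact h _ _
    have hnn : 0 ≤ ∫ ω, (v ⬝ᵥ (A ω * S * (A ω)ᵀ) *ᵥ v + w ⬝ᵥ (A ω * S * (A ω)ᵀ) *ᵥ w
        + 2 * (v ⬝ᵥ (A ω * N * (A ω)ᵀ) *ᵥ w)) ∂μ := integral_nonneg hpt
    linarith [heq ▸ hnn]
  -- the iterates
  set Sg : ℕ → Matrix (Fin n) (Fin n) ℝ :=
    fun k => (fun X => T X)^[k] (r • (1 : Matrix (Fin n) (Fin n) ℝ)) with hSgdef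
  have hSg0 : Sg 0 = r • (1 : Matrix (Fin n) (Fin n) ℝ) := rfl
  have hSgsucc : ∀ k, Sg (k + 1) = T (Sg k) := fun k =>
    Function.iterate_succ_apply' (fun X => T X) k _
  have hone : (r • (1 : Matrix (Fin n) (Fin n) ℝ)).PosSemidef := by
    refine Matrix.PosSemidef.of_dotProduct_mulVec_nonneg ?_ ?_
    · simp [Matrix.IsHermitian]
    · intro x
      simp only [star_trivial]
      rw [Matrix.smul_mulVec, Matrix.one_mulVec]
      simp only [dotProduct_smul, smul_eq_mul]
      exact mul_nonneg hr0 (by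
        simp only [dotProduct]
        exact Finset.sum_nonneg fun k _ => mul_self_nonneg _)
  have hInv : ∀ k : ℕ, (Sg k).PosSemidef ∧ ∀ v w : Fin n → ℝ,
      0 ≤ v ⬝ᵥ (Sg k) *ᵥ v + w ⬝ᵥ (Sg k) *ᵥ w + 2 * (v ⬝ᵥ ((c ^ k) • M) *ᵥ w) := by
    intro k
    induction k with
    | zero =>
      refine ⟨hSg0 ▸ hone, ?_⟩
      intro v w
      rw [hSg0]
      simpa using hDom0 v w
    | succ k ih =>
      refine ⟨hSgsucc k ▸ hpart1 _ ih.1, ?_⟩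
      intro v w
      rw [hSgsucc]
      have hstep' := hstep (Sg k) ((c ^ k) • M) ih.2 v w
      have hTM : T ((c : ℝ) ^ k • M) = c ^ (k + 1) • M := by
        rw [T.map_smul, hMc, smul_smul, ← _root_.pow_succ]
      rw [hTM] at hstep'
      exact hstep'
  -- trace decay
  have ht0 : ∀ k : ℕ, (P * Sg k).trace
      ≤ (lam ^ 2) ^ k * (P * (r • (1 : Matrix (Fin n) (Fin n) ℝ))).trace := by
    intro k
    induction k with
    | zero => simp [hSg0]
    | succ k ih =>
      have h1 : (P * Sg (k + 1)).trace ≤ lam ^ 2 * (P * Sg k).trace := by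
        rw [hSgsucc]; exact hcontr _ (hInv k).1
      have h2 : lam ^ 2 * (P * Sg k).trace
          ≤ lam ^ 2 * ((lam ^ 2) ^ k * (P * (r • (1 : Matrix (Fin n) (Fin n) ℝ))).trace) :=
        mul_le_mul_of_nonneg_left ih (sq_nonneg lam)
      calc (P * Sg (k + 1)).trace ≤ _ := h1
        _ ≤ _ := h2
        _ = (lam ^ 2) ^ (k + 1) * (P * (r • (1 : Matrix (Fin n) (Fin n) ℝ))).trace := by ring
  have hPinv_diag : ∀ i, 0 ≤ P⁻¹ i i := by
    intro i
    have h := (hP.posSemidef.inv).dotProduct_mulVec_nonneg (Pi.single i 1)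
    simpa [star_trivial, dotProduct, Matrix.mulVec, Pi.single_apply] using h
  set t0 : ℝ := (P * (r • (1 : Matrix (Fin n) (Fin n) ℝ))).trace with ht0def
  set K : ℝ := (P⁻¹ i0 i0 + P⁻¹ j0 j0) / 2 * t0 with hK
  -- the key estimate
  have hkey : ∀ k : ℕ, |c| ^ k * |M i0 j0| ≤ K * (lam ^ 2) ^ k := by
    intro k
    obtain ⟨hPSDk, hDomk⟩ := hInv k
    have h1 := hDomk (Pi.single i0 1) (Pi.single j0 1)
    have h2 := hDomk (Pi.single i0 1) (-(Pi.single j0 1))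
    have hvv : (Pi.single i0 1 : Fin n → ℝ) ⬝ᵥ (Sg k) *ᵥ (Pi.single i0 1) = Sg k i0 i0 := by
      simp [dotProduct, Matrix.mulVec, Pi.single_apply]
    have hww : (Pi.single j0 1 : Fin n → ℝ) ⬝ᵥ (Sg k) *ᵥ (Pi.single j0 1) = Sg k j0 j0 := by
      simp [dotProduct, Matrix.mulVec, Pi.single_apply]
    have hvw : (Pi.single i0 1 : Fin n → ℝ) ⬝ᵥ ((c ^ k) • M) *ᵥ (Pi.single j0 1)
        = c ^ k * M i0 j0 := by
      simp [dotProduct, Matrix.mulVec, Pi.single_apply, Matrix.smul_apply]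
    have hneg1 : (Pi.single i0 1 : Fin n → ℝ) ⬝ᵥ ((c ^ k) • M) *ᵥ (-(Pi.single j0 1))
        = -(c ^ k * M i0 j0) := by
      rw [Matrix.mulVec_neg, dotProduct_neg, hvw]
    have hneg2 : (-(Pi.single j0 1) : Fin n → ℝ) ⬝ᵥ (Sg k) *ᵥ (-(Pi.single j0 1))
        = Sg k j0 j0 := by
      rw [Matrix.mulVec_neg, neg_dotProduct, dotProduct_neg, neg_neg, hww]
    rw [hvv, hww, hvw] at h1
    rw [hvv, hneg2, hneg1] at h2
    have habs : |c ^ k * M i0 j0| ≤ (Sg k i0 i0 + Sg k j0 j0) / 2 := by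
      rw [abs_le]; constructor <;> linarith
    have hdi : Sg k i0 i0 ≤ P⁻¹ i0 i0 * (P * Sg k).trace :=
      diag_le_inv_diag_mul_trace hP hPSDk i0
    have hdj : Sg k j0 j0 ≤ P⁻¹ j0 j0 * (P * Sg k).trace :=
      diag_le_inv_diag_mul_trace hP hPSDk j0
    have htk := ht0 k
    have htrk : (P * Sg k).trace ≤ (lam ^ 2) ^ k * t0 := htk
    have hl2k : (0:ℝ) ≤ (lam ^ 2) ^ k := pow_nonneg (sq_nonneg lam) k
    have hci : |c ^ k * M i0 j0| = |c| ^ k * |M i0 j0| := by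
      rw [abs_mul, abs_pow]
    rw [hci] at habs
    have hii := hPinv_diag i0
    have hjj := hPinv_diag j0
    have htrknn : 0 ≤ (P * Sg k).trace :=
      trace_mul_psd_nonneg hP.posSemidef hPSDk
    calc |c| ^ k * |M i0 j0| ≤ (Sg k i0 i0 + Sg k j0 j0) / 2 := habs
      _ ≤ (P⁻¹ i0 i0 + P⁻¹ j0 j0) / 2 * (P * Sg k).trace := by nlinarith
      _ ≤ (P⁻¹ i0 i0 + P⁻¹ j0 j0) / 2 * ((lam ^ 2) ^ k * t0) := by nlinarith
      _ = K * (lam ^ 2) ^ k := by rw [hK]; ring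
  -- conclude
  by_contra hgt
  push_neg at hgt
  have hlam2pos : (0:ℝ) < lam ^ 2 := pow_pos hlam.1 2
  have habsM : (0:ℝ) < |M i0 j0| := abs_pos.mpr hij
  have hratio : 1 < |c| / lam ^ 2 := (one_lt_div hlam2pos).mpr hgt
  obtain ⟨k, hk⟩ := pow_unbounded_of_one_lt (K / |M i0 j0|) hratio
  have hle : (|c| / lam ^ 2) ^ k ≤ K / |M i0 j0| := by
    rw [div_pow, div_le_div_iff₀ (pow_pos hlam2pos k) habsM]
    calc |c| ^ k * |M i0 j0| ≤ K * (lam ^ 2) ^ k := hkey k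
      _ = K * (lam ^ 2) ^ k := rfl
  linarith
end
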